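/- Let C be a phylogenetic set of cuts of N and let A be a cluster (one side of a cut) of C. Then the collection of all clusters and singletons of N that are subsets of A, partially ordered by inclusion, has a Hasse diagram that is a tree (i.e., connected and acyclic). -/

import Mathlib

open Set

/-- A phylogenetic set of cuts of `α`, where a cut `(A | Aᶜ)` is represented by the
cluster `A`: every cluster and its complement have cardinality at least 2, the set of
clusters is closed under complement (cuts are unordered), and axiom (C) holds: for any
two cuts, at least one of the four pairwise intersections of their sides is empty. -/
def IsCutSet {α : Type*} (C : Set (Set α)) : Prop :=
  (∀ A ∈ C, 2 ≤ A.ncard ∧ 2 ≤ Aᶜ.ncard ∧ Aᶜ ∈ C) ∧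
  ∀ A ∈ C, ∀ B ∈ C, A ∩ B = ∅ ∨ A ∩ Bᶜ = ∅ ∨ Aᶜ ∩ B = ∅ ∨ Aᶜ ∩ Bᶜ = ∅

/-- `VA C X` is the set of all clusters of `C` and singletons of `α` that are
subsets of `X`. -/
def VA {α : Type*} (C : Set (Set α)) (X : Set α) : Set (Set α) :=
  {S | (S ∈ C ∨ ∃ i : α, S = {i}) ∧ S ⊆ X}

/-- `covIn C X S T` says that `T` covers `S` in the inclusion poset `VA C X`. -/
def covIn {α : Type*} (C : Set (Set α)) (X : Set α) (S T : Set α) : Prop :=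
  S ∈ VA C X ∧ T ∈ VA C X ∧ S ⊂ T ∧ ∀ U ∈ VA C X, ¬(S ⊂ U ∧ U ⊂ T)

/-- The Hasse diagram of the inclusion poset `VA C X`, as an undirected graph. -/
def hasse {α : Type*} (C : Set (Set α)) (X : Set α) : SimpleGraph ↥(VA C X) where
  Adj S T := covIn C X S.1 T.1 ∨ covIn C X T.1 S.1
  symm := ⟨fun S T h => h.symm⟩
  loopless := ⟨by
    rintro S (h | h) <;> exact ssubset_irrefl _ h.2.2.1⟩

section Aux

variable {α : Type*} [Fintype α] {C : Set (Set α)} {A : Set α}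

lemma VA_nonempty (hC : IsCutSet C) {S : Set α} (hS : S ∈ VA C A) : S.Nonempty := by
  rcases hS.1 with h | ⟨i, rfl⟩
  · have h2 := (hC.1 S h).1
    exact (Set.ncard_pos S.toFinite).mp (by omega)
  · exact ⟨i, rfl⟩

/-- Laminarity: any two members of `VA C A` with nonempty intersection are nested. -/
lemma laminar (hC : IsCutSet C) (hA : A ∈ C) {S T : Set α}
    (hS : S ∈ VA C A) (hT : T ∈ VA C A) (hST : (S ∩ T).Nonempty) : S ⊆ T ∨ T ⊆ S := by
  rcases hS.1 with hSC | ⟨i, hi⟩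
  · rcases hT.1 with hTC | ⟨j, hj⟩
    · have hAc : (Aᶜ).Nonempty :=
        (Set.ncard_pos (Aᶜ).toFinite).mp (by have := (hC.1 A hA).2.1; omega)
      obtain ⟨x, hx⟩ := hAc
      rcases hC.2 S hSC T hTC with h | h | h | h
      · obtain ⟨y, hy⟩ := hST
        exact absurd h (by intro h; rw [h] at hy; exact hy)
      · left; intro y hy; by_contra hyT
        exact absurd h (by intro h; exact absurd (show y ∈ S ∩ Tᶜ from ⟨hy, hyT⟩) (by rw [h]; exact notMem_empty y))
      · right; intro y hy; by_contra hyS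
        exact absurd h (by intro h; exact absurd (show y ∈ Sᶜ ∩ T from ⟨hyS, hy⟩) (by rw [h]; exact notMem_empty y))
      · exfalso
        have hxS : x ∉ S := fun hxS => hx (hS.2 hxS)
        have hxT : x ∉ T := fun hxT => hx (hT.2 hxT)
        exact absurd (show x ∈ Sᶜ ∩ Tᶜ from ⟨hxS, hxT⟩) (by rw [h]; exact notMem_empty x)
    · subst hj
      obtain ⟨y, hyS, hyT⟩ := hST
      rcases hyT with rfl
      exact Or.inr (singleton_subset_iff.mpr hyS)
  · subst hi
    obtain ⟨y, hyS, hyT⟩ := hST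
    rcases hyS with rfl
    exact Or.inl (singleton_subset_iff.mpr hyT)

/-- If `Y` covers `X` and `X ⊂ S` for some `S ∈ VA C A`, then `Y ⊆ S`. -/
lemma cover_le (hC : IsCutSet C) (hA : A ∈ C) {X Y S : Set α}
    (hXY : covIn C A X Y) (hS : S ∈ VA C A) (hXS : X ⊂ S) : Y ⊆ S := by
  obtain ⟨hX, hY, hss, hmax⟩ := hXY
  have hne : (Y ∩ S).Nonempty := by
    obtain ⟨x, hx⟩ := VA_nonempty hC hX
    exact ⟨x, hss.subset hx, hXS.subset hx⟩
  rcases laminar hC hA hY hS hne with h | h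
  · exact h
  · by_cases hSY : S = Y
    · exact hSY ▸ subset_rfl
    · exact absurd ⟨hXS, h.ssubset_of_ne hSY⟩ (hmax S hS)

lemma cover_unique (hC : IsCutSet C) (hA : A ∈ C) {X Y Y' : Set α}
    (h : covIn C A X Y) (h' : covIn C A X Y') : Y = Y' :=
  subset_antisymm (cover_le hC hA h h'.2.1 h'.2.2.1) (cover_le hC hA h' h.2.1 h.2.2.1)

lemma exists_cover (hC : IsCutSet C) (hA : A ∈ C) {S : Set α}
    (hS : S ∈ VA C A) (hne : S ≠ A) : ∃ T, covIn C A S T := by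
  set 𝒯 : Set (Set α) := {T | T ∈ VA C A ∧ S ⊂ T} with h𝒯
  have hAmem : A ∈ 𝒯 := ⟨⟨Or.inl hA, subset_rfl⟩, hS.2.ssubset_of_ne hne⟩
  obtain ⟨T, hT, hmin⟩ : ∃ T ∈ 𝒯, ∀ U ∈ 𝒯, U ⊆ T → T = U := by
    obtain ⟨T, hT⟩ := (Set.toFinite 𝒯).exists_minimal ⟨A, hAmem⟩
    exact ⟨T, hT.prop, fun U hU hle => subset_antisymm (hT.2 hU hle) hle⟩
  refine ⟨T, hS, hT.1, hT.2, ?_⟩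
  rintro U hU ⟨hSU, hUT⟩
  exact hUT.ne (hmin U ⟨hU, hSU⟩ hUT.subset).symm

lemma bridge_of_cov (hC : IsCutSet C) (hA : A ∈ C) {v w : ↥(VA C A)}
    (hvw : covIn C A v.1 w.1) : (hasse C A).IsBridge s(v, w) := by
  rw [SimpleGraph.isBridge_iff]
  intro hreach
  obtain ⟨p⟩ := hreach
  have step : ∀ x y : ↥(VA C A),
      ((hasse C A) \ SimpleGraph.fromEdgeSet {s(v, w)}).Adj x y → x.1 ⊆ v.1 → y.1 ⊆ v.1 := by
    intro x y hxy hx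
    rw [SimpleGraph.sdiff_adj, SimpleGraph.fromEdgeSet_adj] at hxy
    obtain ⟨hadj, hne⟩ := hxy
    have hxyne : x ≠ y := (hasse C A).ne_of_adj hadj
    have hnotedge : s(x, y) ≠ s(v, w) := fun h => hne ⟨mem_singleton_iff.mpr h, hxyne⟩
    rcases (show covIn C A x.1 y.1 ∨ covIn C A y.1 x.1 from hadj) with hcov | hcov
    · -- covIn x y : y is the unique cover of x
      by_cases hxv : x.1 = v.1
      · have hxv' : x = v := Subtype.ext hxv
        subst hxv'
        have : y.1 = w.1 := cover_unique hC hA hcov hvw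
        exact absurd (by rw [Subtype.ext this]) hnotedge
      · exact cover_le hC hA hcov v.2 (hx.ssubset_of_ne hxv)
    · -- covIn y x : y ⊂ x ⊆ v
      exact hcov.2.2.1.subset.trans hx
  have final : ∀ (a b : ↥(VA C A))
      (_ : ((hasse C A) \ SimpleGraph.fromEdgeSet {s(v, w)}).Walk a b),
      a.1 ⊆ v.1 → b.1 ⊆ v.1 := by
    intro a b q
    induction q with
    | nil => exact id
    | cons h _ ih => intro ha; exact ih (step _ _ h ha)
  have : w.1 ⊆ v.1 := final v w p subset_rfl
  exact absurd this (fun h => (ssubset_irrefl v.1) (hvw.2.2.1.trans_subset h))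

end Aux

/-- for a cluster `A` of a phylogenetic set of cuts `C`, the Hasse diagram
of the poset of clusters and singletons contained in `A` is a tree (connected and
acyclic). -/
theorem stmt9 {α : Type*} [Fintype α] (hcard : 3 ≤ Fintype.card α)
    (C : Set (Set α)) (hC : IsCutSet C) (A : Set α) (hA : A ∈ C) :
    (hasse C A).Connected ∧ (hasse C A).IsAcyclic := by
  classical
  have hAVA : A ∈ VA C A := ⟨Or.inl hA, subset_rfl⟩
  constructor
  · -- Connected
    have key : ∀ n : ℕ, ∀ S : ↥(VA C A), (A \ S.1).toFinset.card ≤ n →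
        (hasse C A).Reachable S ⟨A, hAVA⟩ := by
      intro n
      induction n with
      | zero =>
        intro S h
        have hAS : A ⊆ S.1 := by
          intro x hx
          by_contra hxS
          have : x ∈ (A \ S.1).toFinset := by simp [hx, hxS]
          have := Finset.card_pos.mpr ⟨x, this⟩
          omega
        have : S = ⟨A, hAVA⟩ := Subtype.ext (subset_antisymm S.2.2 hAS)
        exact this ▸ SimpleGraph.Reachable.refl _
      | succ n ih =>
        intro S h
        by_cases hSA : S.1 = A
        · exact (Subtype.ext hSA : S = ⟨A, hAVA⟩) ▸ SimpleGraph.Reachable.refl _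
        · obtain ⟨T, hT⟩ := exists_cover hC hA S.2 hSA
          have hTV : T ∈ VA C A := hT.2.1
          have hadj : (hasse C A).Adj S ⟨T, hTV⟩ := by show covIn C A S.1 T ∨ covIn C A T S.1; exact Or.inl hT
          have hlt : (A \ T).toFinset.card < (A \ S.1).toFinset.card := by
            apply Finset.card_lt_card
            rw [Set.toFinset_ssubset_toFinset]
            constructor
            · exact diff_subset_diff_right hT.2.2.1.subset
            · intro hsub
              obtain ⟨x, hxT, hxS⟩ := exists_of_ssubset hT.2.2.1
              have hxA : x ∈ A := hTV.2 hxT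
              have : x ∈ A \ T := hsub ⟨hxA, hxS⟩
              exact this.2 hxT
          exact hadj.reachable.trans (ih ⟨T, hTV⟩ (show (A \ T).toFinset.card ≤ n by omega))
    have : Nonempty ↥(VA C A) := ⟨⟨A, hAVA⟩⟩
    exact ⟨fun u v => (key _ u le_rfl).trans (key _ v le_rfl).symm⟩
  · -- Acyclic
    rw [SimpleGraph.isAcyclic_iff_forall_adj_isBridge]
    intro v w hvw
    rcases (show covIn C A v.1 w.1 ∨ covIn C A w.1 v.1 from hvw) with h | h
    · exact bridge_of_cov hC hA h
    · rw [Sym2.eq_swap]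
      exact bridge_of_cov hC hA h
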